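/- arXiv:1605.07666 — 3 statements merged into one kernel-verified Lean document; each statement's English description precedes it below -/
import Mathlib

section
/- For every function u in H^1(ℝ), the inequality ‖u‖_{L^6(ℝ)}^6 ≤ (3/μ_ℝ²) ‖u‖_{L^2(ℝ)}^4 ‖u'‖_{L^2(ℝ)}^2 holds, where μ_ℝ = π√3/2; i.e., the sharp Gagliardo–Nirenberg constant on ℝ for the sextic power is K_ℝ = 3/μ_ℝ² = 4/π². -/
open MeasureTheory Set

lemma gn_key (u u' : ℝ → ℝ)
    (hderiv : ∀ x, HasDerivAt u (u' x) x)
    (h2 : Integrable (fun x => (u x) ^ 2))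
    (h2' : Integrable (fun x => (u' x) ^ 2))
    (h6 : Integrable (fun x => (u x) ^ 6))
    (b : ℝ) (hb : 0 < b) (hbM : b * ∫ x, (u x) ^ 2 < Real.pi / 2) :
    b ^ 2 * ∫ x, (u x) ^ 6 ≤ ∫ x, (u' x) ^ 2 := by
  set M := ∫ x, (u x) ^ 2 with hMdef
  have hu_cont : Continuous u := continuous_iff_continuousAt.2 fun x => (hderiv x).continuousAt
  have hu'meas : Measurable u' := by
    have : u' = deriv u := funext fun x => ((hderiv x).deriv).symm
    rw [this]; exact measurable_deriv u
  have h2cont : Continuous (fun x => (u x) ^ 2) := hu_cont.pow 2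
  set m : ℝ → ℝ := fun y => ∫ t in Iic y, (u t) ^ 2 with hmdef
  have hm : ∀ x, HasDerivAt m (u x ^ 2) x := by
    intro x
    have h : m = fun y => (∫ t in Iic (0:ℝ), (u t) ^ 2) + ∫ t in (0:ℝ)..y, (u t) ^ 2 := by
      funext y
      rw [← intervalIntegral.integral_Iic_sub_Iic h2.integrableOn h2.integrableOn]
      ring
    rw [h]
    exact (intervalIntegral.integral_hasDerivAt_right h2.intervalIntegrable
      (h2cont.stronglyMeasurableAtFilter _ _) h2cont.continuousAt).const_add _
  have hm_cont : Continuous m := continuous_iff_continuousAt.2 fun x => (hm x).continuousAt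
  have hm0 : ∀ x, 0 ≤ m x := fun x =>
    setIntegral_nonneg measurableSet_Iic fun t _ => by positivity
  have hmM : ∀ x, m x ≤ M := fun x =>
    setIntegral_le_integral h2 (Filter.Eventually.of_forall fun t => by positivity)
  have hbM0 : 0 ≤ b * M := by
    have : 0 ≤ M := le_trans (hm0 0) (hmM 0)
    positivity
  set θ : ℝ → ℝ := fun x => 2 * b * m x - b * M with hθdef
  have hθ_cont : Continuous θ := ((continuous_const.mul hm_cont).sub continuous_const)
  have hθ_bd : ∀ x, |θ x| ≤ b * M := by
    intro x
    rw [abs_le]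
    constructor <;> simp only [hθdef] <;> nlinarith [hm0 x, hmM x]
  have hcosθ : ∀ x, 0 < Real.cos (θ x) := by
    intro x
    apply Real.cos_pos_of_mem_Ioo
    have h : |θ x| < Real.pi / 2 := lt_of_le_of_lt (hθ_bd x) hbM
    rw [abs_lt] at h
    exact ⟨h.1, h.2⟩
  have hcosbM : 0 < Real.cos (b * M) := by
    apply Real.cos_pos_of_mem_Ioo
    constructor
    · linarith [Real.pi_pos]
    · exact hbM
  have hcos_lb : ∀ x, Real.cos (b * M) ≤ Real.cos (θ x) := by
    intro x
    rw [← Real.cos_abs (θ x)]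
    exact Real.cos_le_cos_of_nonneg_of_le_pi (abs_nonneg _)
      (by linarith [Real.pi_pos, hbM]) (hθ_bd x)
  set ψ : ℝ → ℝ := fun x => -b * Real.tan (θ x) with hψdef
  have hθ_deriv : ∀ x, HasDerivAt θ (2 * b * u x ^ 2) x := fun x =>
    ((hm x).const_mul (2 * b)).sub_const (b * M)
  have hψ_deriv : ∀ x, HasDerivAt ψ (-2 * b ^ 2 * u x ^ 2 / Real.cos (θ x) ^ 2) x := by
    intro x
    have ht := (Real.hasDerivAt_tan (hcosθ x).ne').comp x (hθ_deriv x)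
    have : HasDerivAt (fun y => -b * (Real.tan ∘ θ) y)
        (-b * (1 / Real.cos (θ x) ^ 2 * (2 * b * u x ^ 2))) x := ht.const_mul (-b)
    convert this using 1
    · rfl
    ring
  have hψ_cont : Continuous ψ := continuous_iff_continuousAt.2 fun x => (hψ_deriv x).continuousAt
  have hψ_bd : ∀ x, |ψ x| ≤ b / Real.cos (b * M) := by
    intro x
    simp only [hψdef]
    rw [Real.tan_eq_sin_div_cos, abs_mul, abs_neg, abs_of_pos hb, abs_div,
      abs_of_pos (hcosθ x)]
    have h1 : |Real.sin (θ x)| / Real.cos (θ x) ≤ 1 / Real.cos (b * M) :=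
      div_le_div₀ zero_le_one (Real.abs_sin_le_one _) hcosbM (hcos_lb x)
    calc b * (|Real.sin (θ x)| / Real.cos (θ x)) ≤ b * (1 / Real.cos (b * M)) :=
          mul_le_mul_of_nonneg_left h1 hb.le
      _ = b / Real.cos (b * M) := by rw [mul_one_div]
  set C := b / Real.cos (b * M) with hCdef
  have hC0 : 0 ≤ C := by positivity
  -- integrability of the three products
  have habs36 : ∀ x : ℝ, |u x ^ 3 * u' x| ≤ (u x ^ 6 + u' x ^ 2) / 2 := by
    intro x
    rw [abs_mul]
    nlinarith [sq_nonneg (|u x ^ 3| - |u' x|), abs_nonneg (u x ^ 3), abs_nonneg (u' x),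
      sq_abs (u x ^ 3), sq_abs (u' x), abs_nonneg (u x ^ 3 * u' x)]
  have hI1 : Integrable (fun x => u x ^ 3 * u' x * ψ x) := by
    apply Integrable.mono' (((h6.add h2').const_mul (C / 2)))
    · exact (((hu_cont.pow 3).measurable.mul hu'meas).mul
        hψ_cont.measurable).aestronglyMeasurable
    · refine Filter.Eventually.of_forall fun x => ?_
      simp only [Pi.add_apply, Real.norm_eq_abs]
      rw [abs_mul]
      calc |u x ^ 3 * u' x| * |ψ x| ≤ ((u x ^ 6 + u' x ^ 2) / 2) * C := by
            apply mul_le_mul (habs36 x) (hψ_bd x) (abs_nonneg _)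
            positivity
        _ = C / 2 * (u x ^ 6 + u' x ^ 2) := by ring
  have hI2 : Integrable (fun x => u x ^ 6 * ψ x ^ 2) := by
    apply Integrable.mono' (h6.const_mul (C ^ 2))
    · exact ((hu_cont.pow 6).mul (hψ_cont.pow 2)).aestronglyMeasurable
    · refine Filter.Eventually.of_forall fun x => ?_
      simp only [Real.norm_eq_abs]
      rw [abs_mul, abs_of_nonneg (by positivity : (0:ℝ) ≤ u x ^ 6)]
      have h1 : |ψ x ^ 2| ≤ C ^ 2 := by
        rw [abs_pow]
        exact pow_le_pow_left₀ (abs_nonneg _) (hψ_bd x) 2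
      calc u x ^ 6 * |ψ x ^ 2| ≤ u x ^ 6 * C ^ 2 :=
            mul_le_mul_of_nonneg_left h1 (by positivity)
        _ = C ^ 2 * u x ^ 6 := by ring
  have hcos2_cont : Continuous (fun x => 2 * b ^ 2 / Real.cos (θ x) ^ 2) :=
    continuous_const.div ((Real.continuous_cos.comp hθ_cont).pow 2)
      (fun x => pow_ne_zero 2 (hcosθ x).ne')
  have hcos2_bd : ∀ x : ℝ, 2 * b ^ 2 / Real.cos (θ x) ^ 2
      ≤ 2 * b ^ 2 / Real.cos (b * M) ^ 2 := by
    intro x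
    apply div_le_div_of_nonneg_left (by positivity) (by positivity)
    exact pow_le_pow_left₀ hcosbM.le (hcos_lb x) 2
  have hI3 : Integrable (fun x => u x ^ 6 * (2 * b ^ 2 / Real.cos (θ x) ^ 2)) := by
    apply Integrable.mono' (h6.const_mul (2 * b ^ 2 / Real.cos (b * M) ^ 2))
    · exact ((hu_cont.pow 6).mul hcos2_cont).aestronglyMeasurable
    · refine Filter.Eventually.of_forall fun x => ?_
      simp only [Real.norm_eq_abs]
      rw [abs_mul, abs_of_nonneg (by positivity : (0:ℝ) ≤ u x ^ 6),
        abs_of_nonneg (by positivity : (0:ℝ) ≤ 2 * b ^ 2 / Real.cos (θ x) ^ 2)]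
      calc u x ^ 6 * (2 * b ^ 2 / Real.cos (θ x) ^ 2)
          ≤ u x ^ 6 * (2 * b ^ 2 / Real.cos (b * M) ^ 2) :=
            mul_le_mul_of_nonneg_left (hcos2_bd x) (by positivity)
        _ = 2 * b ^ 2 / Real.cos (b * M) ^ 2 * u x ^ 6 := by ring
  -- the boundary function g and its derivative
  set g : ℝ → ℝ := fun x => u x ^ 4 * ψ x with hgdef
  set g' : ℝ → ℝ := fun x =>
    4 * (u x ^ 3 * u' x * ψ x) - u x ^ 6 * (2 * b ^ 2 / Real.cos (θ x) ^ 2) with hg'def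
  have hg_deriv : ∀ x, HasDerivAt g (g' x) x := by
    intro x
    have h4 : HasDerivAt (fun y => u y ^ 4) (4 * u x ^ 3 * u' x) x := by
      simpa using (hderiv x).fun_pow 4
    have : HasDerivAt ((fun y => u y ^ 4) * ψ) (4 * u x ^ 3 * u' x * ψ x
        + u x ^ 4 * (-2 * b ^ 2 * u x ^ 2 / Real.cos (θ x) ^ 2)) x := h4.mul (hψ_deriv x)
    convert this using 1
    · rfl
    simp only [hg'def, hψdef]
    have hc := (hcosθ x).ne'
    field_simp
    ring
  have hg_int : Integrable g := by
    apply Integrable.mono' ((h2.add h6).const_mul C)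
    · exact ((hu_cont.pow 4).mul hψ_cont).aestronglyMeasurable
    · refine Filter.Eventually.of_forall fun x => ?_
      simp only [Pi.add_apply, Real.norm_eq_abs, hgdef]
      rw [abs_mul]
      have h4 : |u x ^ 4| ≤ u x ^ 2 + u x ^ 6 := by
        rw [abs_of_nonneg (by positivity : (0:ℝ) ≤ u x ^ 4)]
        nlinarith [sq_nonneg (u x * (u x ^ 2 - 1)), sq_nonneg (u x ^ 2 - 1), sq_nonneg (u x)]
      calc |u x ^ 4| * |ψ x| ≤ (u x ^ 2 + u x ^ 6) * C :=
            mul_le_mul h4 (hψ_bd x) (abs_nonneg _) (by positivity)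
        _ = C * (u x ^ 2 + u x ^ 6) := by ring
  have hg'_int : Integrable g' := ((hI1.const_mul 4).sub hI3)
  have hzero : (∫ x, g' x) = 0 :=
    integral_eq_zero_of_hasDerivAt_of_integrable hg_deriv hg'_int hg_int
  have hsplit : (4 : ℝ) * (∫ x, u x ^ 3 * u' x * ψ x)
      = ∫ x, u x ^ 6 * (2 * b ^ 2 / Real.cos (θ x) ^ 2) := by
    have := integral_sub (hI1.const_mul 4) hI3
    simp only [hg'def] at hzero
    rw [hzero] at this
    rw [integral_const_mul] at this
    linarith [this.symm]
  -- positivity of the square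
  have hsq : 0 ≤ ∫ x, (u' x - u x ^ 3 * ψ x) ^ 2 :=
    integral_nonneg fun x => by positivity
  have hexpand : (∫ x, (u' x - u x ^ 3 * ψ x) ^ 2)
      = (∫ x, u' x ^ 2) - (2 * (∫ x, u x ^ 3 * u' x * ψ x) - ∫ x, u x ^ 6 * ψ x ^ 2) := by
    have hI12 : Integrable (fun x => 2 * (u x ^ 3 * u' x * ψ x) - u x ^ 6 * ψ x ^ 2) :=
      (hI1.const_mul 2).sub hI2
    calc (∫ x, (u' x - u x ^ 3 * ψ x) ^ 2)
        = ∫ x, (u' x ^ 2 - (2 * (u x ^ 3 * u' x * ψ x) - u x ^ 6 * ψ x ^ 2)) := by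
          congr 1; funext x; ring
      _ = (∫ x, u' x ^ 2) - ∫ x, (2 * (u x ^ 3 * u' x * ψ x) - u x ^ 6 * ψ x ^ 2) :=
          integral_sub h2' hI12
      _ = (∫ x, u' x ^ 2) - ((∫ x, 2 * (u x ^ 3 * u' x * ψ x)) - ∫ x, u x ^ 6 * ψ x ^ 2) := by
          rw [integral_sub (hI1.const_mul 2) hI2]
      _ = (∫ x, u' x ^ 2) - (2 * (∫ x, u x ^ 3 * u' x * ψ x) - ∫ x, u x ^ 6 * ψ x ^ 2) := by
          rw [integral_const_mul]
  -- pointwise identity giving b^2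
  have hpt : ∀ x : ℝ, u x ^ 6 * b ^ 2
      = u x ^ 6 * (2 * b ^ 2 / Real.cos (θ x) ^ 2) / 2 - u x ^ 6 * ψ x ^ 2 := by
    intro x
    have hc := (hcosθ x).ne'
    have hs := Real.sin_sq_add_cos_sq (θ x)
    simp only [hψdef, Real.tan_eq_sin_div_cos]
    field_simp
    linear_combination (u x ^ 6) * hs
  have hb2S : b ^ 2 * (∫ x, u x ^ 6)
      = (∫ x, u x ^ 6 * (2 * b ^ 2 / Real.cos (θ x) ^ 2)) / 2 - ∫ x, u x ^ 6 * ψ x ^ 2 := by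
    rw [← integral_div, ← integral_sub (hI3.div_const 2) hI2, mul_comm, ← integral_mul_const]
    exact integral_congr_ae (Filter.Eventually.of_forall fun x => hpt x)
  rw [hb2S, ← hsplit]
  rw [hexpand] at hsq
  linarith

/-- Sharp Gagliardo–Nirenberg inequality on ℝ for the sextic power,
with constant `K_ℝ = 3/μ_ℝ² = 4/π²`, where `μ_ℝ = π√3/2`. -/
theorem stmt_0 (u u' : ℝ → ℝ)
    (hderiv : ∀ x, HasDerivAt u (u' x) x)
    (h2 : Integrable (fun x => (u x) ^ 2))
    (h2' : Integrable (fun x => (u' x) ^ 2))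
    (h6 : Integrable (fun x => (u x) ^ 6)) :
    (∫ x, (u x) ^ 6) ≤ 3 / (Real.pi * Real.sqrt 3 / 2) ^ 2 *
      (∫ x, (u x) ^ 2) ^ 2 * ∫ x, (u' x) ^ 2 ∧
    3 / (Real.pi * Real.sqrt 3 / 2) ^ 2 = 4 / Real.pi ^ 2 := by
  have hπ : (0:ℝ) < Real.pi := Real.pi_pos
  have hconst : 3 / (Real.pi * Real.sqrt 3 / 2) ^ 2 = 4 / Real.pi ^ 2 := by
    have h3 : (Real.sqrt 3) ^ 2 = 3 := Real.sq_sqrt (by norm_num)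
    have he : (Real.pi * Real.sqrt 3 / 2) ^ 2 = 3 * Real.pi ^ 2 / 4 := by
      rw [div_pow, mul_pow, h3]; ring
    rw [he, div_div_eq_mul_div, div_eq_div_iff (by positivity) (by positivity)]
    ring
  refine ⟨?_, hconst⟩
  rw [hconst]
  set M := ∫ x, (u x) ^ 2 with hMdef
  set S := ∫ x, (u x) ^ 6 with hSdef
  set A := ∫ x, (u' x) ^ 2 with hAdef
  have hS0 : 0 ≤ S := integral_nonneg fun x => by positivity
  have hA0 : 0 ≤ A := integral_nonneg fun x => by positivity
  have hM0 : 0 ≤ M := integral_nonneg fun x => by positivity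
  rcases eq_or_lt_of_le hM0 with hM | hMpos
  · -- M = 0 : then u² = 0 a.e., so S = 0
    have hae : (fun x => (u x) ^ 2) =ᵐ[volume] 0 := by
      rw [← integral_eq_zero_iff_of_nonneg (fun x => by positivity) h2]
      exact hM.symm
    have hae6 : (fun x => (u x) ^ 6) =ᵐ[volume] 0 := by
      filter_upwards [hae] with x hx
      simp only [Pi.zero_apply] at hx ⊢
      have hux : u x = 0 := by
        exact pow_eq_zero_iff (by norm_num : (2:ℕ) ≠ 0) |>.1 hx
      simp [hux]
    have hSz : S = 0 := by
      rw [hSdef, integral_congr_ae hae6]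
      simp
    rw [hSz]
    positivity
  · have hkey : ∀ b : ℝ, 0 < b → b * M < Real.pi / 2 → b ^ 2 * S ≤ A :=
      fun b hb hbm => gn_key u u' hderiv h2 h2' h6 b hb hbm
    have hfinal : (Real.pi / (2 * M)) ^ 2 * S ≤ A := by
      rcases eq_or_lt_of_le hS0 with hS | hSpos
      · rw [← hS, mul_zero]; exact hA0
      · by_contra hcon
        push_neg at hcon
        have hAS : A / S < (Real.pi / (2 * M)) ^ 2 := by
          rw [div_lt_iff₀ hSpos]; linarith
        set r := Real.sqrt (A / S) with hrdef
        have hr0 : 0 ≤ r := Real.sqrt_nonneg _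
        have hbstar : (0:ℝ) < Real.pi / (2 * M) := by positivity
        have hrlt : r < Real.pi / (2 * M) := by
          rw [hrdef]
          calc Real.sqrt (A / S) < Real.sqrt ((Real.pi / (2 * M)) ^ 2) :=
                Real.sqrt_lt_sqrt (by positivity) hAS
            _ = Real.pi / (2 * M) := Real.sqrt_sq hbstar.le
        set b := (r + Real.pi / (2 * M)) / 2 with hbdef
        have hb0 : 0 < b := by positivity
        have hblt : b < Real.pi / (2 * M) := by rw [hbdef]; linarith
        have hbm : b * M < Real.pi / 2 := by
          have := (mul_lt_mul_of_pos_right hblt hMpos)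
          calc b * M < Real.pi / (2 * M) * M := this
            _ = Real.pi / 2 := by field_simp
        have hineq := hkey b hb0 hbm
        have hrb : r < b := by rw [hbdef]; linarith
        have hr2 : r ^ 2 = A / S := Real.sq_sqrt (by positivity)
        have hb2 : A / S < b ^ 2 := by
          rw [← hr2]
          exact pow_lt_pow_left₀ hrb hr0 (by norm_num)
        have : b ^ 2 * S ≤ A := hineq
        rw [div_lt_iff₀ hSpos] at hb2
        linarith
    -- from (π/(2M))² S ≤ A deduce S ≤ 4/π² M² A
    have key2 : Real.pi ^ 2 * S ≤ 4 * M ^ 2 * A := by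
      have hmul := mul_le_mul_of_nonneg_right hfinal
        (by positivity : (0:ℝ) ≤ 4 * M ^ 2)
      calc Real.pi ^ 2 * S = (Real.pi / (2 * M)) ^ 2 * S * (4 * M ^ 2) := by
            have h2m : ((2:ℝ) * M) ^ 2 = 4 * M ^ 2 := by ring
            rw [div_pow, h2m, div_mul_eq_mul_div, div_mul_eq_mul_div,
              eq_div_iff (by positivity : (4:ℝ) * M ^ 2 ≠ 0)]
        _ ≤ A * (4 * M ^ 2) := hmul
        _ = 4 * M ^ 2 * A := by ring
    have : S ≤ 4 * M ^ 2 * A / Real.pi ^ 2 :=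
      (le_div_iff₀ (by positivity)).2 (by linarith)
    have he : 4 / Real.pi ^ 2 * M ^ 2 * A = 4 * M ^ 2 * A / Real.pi ^ 2 := by ring
    linarith [he]
end

section
/- For every function u in H^1(ℝ⁺) (u defined on [0,∞) with u, u' ∈ L²), the inequality ‖u‖_{L^6(ℝ⁺)}^6 ≤ K_{ℝ⁺} ‖u‖_{L^2(ℝ⁺)}^4 ‖u'‖_{L^2(ℝ⁺)}^2 holds with K_{ℝ⁺} = 3/μ_{ℝ⁺}² = 16/π², where μ_{ℝ⁺} = π√3/4. -/
open MeasureTheory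

set_option maxHeartbeats 1000000 in
/-- Gagliardo–Nirenberg inequality on the half-line `ℝ⁺` with sharp constant
`K_{ℝ⁺} = 3/μ_{ℝ⁺}² = 16/π²`, where `μ_{ℝ⁺} = π√3/4`. -/
theorem stmt_8 (u u' : ℝ → ℝ)
    (hderiv : ∀ x ∈ Set.Ici (0:ℝ), HasDerivWithinAt u (u' x) (Set.Ici 0) x)
    (h2 : IntegrableOn (fun x => (u x) ^ 2) (Set.Ioi 0))
    (h2' : IntegrableOn (fun x => (u' x) ^ 2) (Set.Ioi 0))
    (h6 : IntegrableOn (fun x => (u x) ^ 6) (Set.Ioi 0)) :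
    (∫ x in Set.Ioi (0:ℝ), (u x) ^ 6) ≤ 3 / (Real.pi * Real.sqrt 3 / 4) ^ 2 *
      (∫ x in Set.Ioi (0:ℝ), (u x) ^ 2) ^ 2 * (∫ x in Set.Ioi (0:ℝ), (u' x) ^ 2) ∧
    3 / (Real.pi * Real.sqrt 3 / 4) ^ 2 = 16 / Real.pi ^ 2 := by
  have hπ : (0:ℝ) < Real.pi := Real.pi_pos
  have hconst : 3 / (Real.pi * Real.sqrt 3 / 4) ^ 2 = 16 / Real.pi ^ 2 := by
    have h3 : Real.sqrt 3 ^ 2 = 3 := Real.sq_sqrt (by norm_num)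
    rw [div_pow, mul_pow, h3]
    field_simp
    ring
  refine ⟨?_, hconst⟩
  rw [hconst]
  set I := ∫ x in Set.Ioi (0:ℝ), (u x) ^ 2 with hI_def
  set J := ∫ x in Set.Ioi (0:ℝ), (u' x) ^ 2 with hJ_def
  set A := ∫ x in Set.Ioi (0:ℝ), (u x) ^ 6 with hA_def
  have hI_nonneg : 0 ≤ I :=
    setIntegral_nonneg measurableSet_Ioi fun x _ => sq_nonneg _
  have hJ_nonneg : 0 ≤ J :=
    setIntegral_nonneg measurableSet_Ioi fun x _ => sq_nonneg _
  have hA_nonneg : 0 ≤ A :=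
    setIntegral_nonneg measurableSet_Ioi fun x _ => even_iff_two_dvd.mpr ⟨3, rfl⟩ |>.pow_nonneg _
  -- continuity and measurability
  have hu_cont : ContinuousOn u (Set.Ici 0) := fun x hx => (hderiv x hx).continuousWithinAt
  have hu_meas : AEMeasurable u (volume.restrict (Set.Ioi 0)) :=
    (hu_cont.mono Set.Ioi_subset_Ici_self).aemeasurable measurableSet_Ioi
  have hu'_deriv : ∀ x : ℝ, 0 < x → HasDerivAt u (u' x) x := by
    intro x hx
    exact (hderiv x hx.le).hasDerivAt (Ici_mem_nhds hx)
  have hu'_meas : AEMeasurable u' (volume.restrict (Set.Ioi 0)) := by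
    refine (measurable_deriv u).aemeasurable.congr ?_
    filter_upwards [ae_restrict_mem measurableSet_Ioi] with x hx
    exact ((hu'_deriv x hx).deriv).symm ▸ rfl
  -- integrability of u * u'
  have huu'_int : IntegrableOn (fun x => u x * u' x) (Set.Ioi 0) := by
    refine (h2.add h2').mono' (hu_meas.mul hu'_meas).aestronglyMeasurable ?_
    filter_upwards with x
    have := sq_nonneg (|u x| - |u' x|)
    rw [Real.norm_eq_abs, abs_mul]
    simp only [Pi.add_apply]
    nlinarith [abs_nonneg (u x), abs_nonneg (u' x), sq_abs (u x), sq_abs (u' x)]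
  -- general FTC helper on [a,b] ⊆ [0,∞)
  have hftc : ∀ (f f' : ℝ → ℝ), (∀ x ∈ Set.Ici (0:ℝ), HasDerivWithinAt f (f' x) (Set.Ici 0) x) →
      IntegrableOn f' (Set.Ioi 0) → ∀ a b : ℝ, 0 ≤ a → a ≤ b →
      ∫ y in a..b, f' y = f b - f a := by
    intro f f' hd hint a b ha hab
    refine intervalIntegral.integral_eq_sub_of_hasDerivAt_of_le hab ?_ ?_ ?_
    · exact fun x hx => ((hd x (le_trans ha hx.1)).continuousWithinAt).mono
        (fun y hy => le_trans ha hy.1)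
    · intro x hx
      exact (hd x (le_trans ha (le_of_lt hx.1))).hasDerivAt
        (Ici_mem_nhds (lt_of_le_of_lt ha hx.1))
    · rw [intervalIntegrable_iff_integrableOn_Ioc_of_le hab]
      exact hint.mono_set (fun y hy => lt_of_le_of_lt ha hy.1)
  have hv_deriv : ∀ x ∈ Set.Ici (0:ℝ),
      HasDerivWithinAt (fun y => u y ^ 2) (2 * u x * u' x) (Set.Ici 0) x := by
    intro x hx
    have := (hderiv x hx).pow 2
    show HasDerivWithinAt (u ^ 2) (2 * u x * u' x) (Set.Ici 0) x
    simpa [mul_comm, mul_assoc] using this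
  have hv_cont : ContinuousOn (fun x => u x ^ 2) (Set.Ici 0) := hu_cont.pow 2
  have h2uu'_int : IntegrableOn (fun x => 2 * u x * u' x) (Set.Ioi 0) := by
    simpa only [IntegrableOn, mul_assoc] using huu'_int.const_mul 2
  -- u ^ 2 tends to 0 at infinity
  have hv0 : Filter.Tendsto (fun b => u b ^ 2) Filter.atTop (nhds 0) := by
    have hlim : Filter.Tendsto (fun b => ∫ y in (0:ℝ)..b, 2 * u y * u' y)
        Filter.atTop (nhds (∫ y in Set.Ioi (0:ℝ), 2 * u y * u' y)) :=
      intervalIntegral_tendsto_integral_Ioi 0 h2uu'_int Filter.tendsto_id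
    have htv : Filter.Tendsto (fun b => u b ^ 2) Filter.atTop
        (nhds (u 0 ^ 2 + ∫ y in Set.Ioi (0:ℝ), 2 * u y * u' y)) := by
      refine (hlim.const_add (u 0 ^ 2)).congr' ?_
      filter_upwards [Filter.eventually_ge_atTop (0:ℝ)] with b hb
      have h := hftc (fun y => u y ^ 2) (fun y => 2 * u y * u' y) hv_deriv h2uu'_int 0 b
        le_rfl hb
      rw [h]; ring
    have hL_nonneg : 0 ≤ u 0 ^ 2 + ∫ y in Set.Ioi (0:ℝ), 2 * u y * u' y :=
      ge_of_tendsto' htv fun b => sq_nonneg (u b)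
    have hL0 : u 0 ^ 2 + (∫ y in Set.Ioi (0:ℝ), 2 * u y * u' y) = 0 := by
      set L := u 0 ^ 2 + ∫ y in Set.Ioi (0:ℝ), 2 * u y * u' y with hLdef
      by_contra hL
      have hLpos : 0 < L := lt_of_le_of_ne hL_nonneg (Ne.symm hL)
      have hev : ∀ᶠ b in Filter.atTop, L / 2 ≤ u b ^ 2 :=
        htv.eventually (eventually_ge_nhds (by linarith))
      obtain ⟨R, hR⟩ := Filter.eventually_atTop.1 hev
      have hconst_int : IntegrableOn (fun _ => L / 2) (Set.Ioi (max R 0)) := by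
        refine (h2.mono_set ?_).mono' aestronglyMeasurable_const ?_
        · exact fun y hy => lt_of_le_of_lt (le_max_right R 0) hy
        · filter_upwards [ae_restrict_mem measurableSet_Ioi] with x hx
          rw [Real.norm_eq_abs, abs_of_nonneg (by linarith : (0:ℝ) ≤ L / 2)]
          exact hR x (le_of_lt (lt_of_le_of_lt (le_max_left R 0) hx))
      rcases integrable_const_iff.1 hconst_int with h | h
      · exact absurd h (ne_of_gt (by linarith))
      · rw [isFiniteMeasure_restrict, Real.volume_Ioi] at h
        exact h rfl
    rw [hL0] at htv
    exact htv
  -- Main case split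
  by_cases hzero : ∀ x ∈ Set.Ici (0:ℝ), u x = 0
  · have hA0 : A = 0 := by
      rw [hA_def]
      rw [setIntegral_congr_fun (g := fun _ => (0:ℝ)) measurableSet_Ioi
        (fun x hx => by simp [hzero x (Set.Ioi_subset_Ici_self hx)])]
      simp
    rw [hA0]
    positivity
  · push_neg at hzero
    obtain ⟨x₁, hx₁0, hx₁⟩ := hzero
    -- the maximum of u^2 on [0,∞)
    obtain ⟨x₀, hx₀0, hS_att, hS_bound⟩ :
        ∃ x₀, 0 ≤ x₀ ∧ 0 < u x₀ ^ 2 ∧ ∀ x, 0 ≤ x → u x ^ 2 ≤ u x₀ ^ 2 := by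
      have hε : 0 < u x₁ ^ 2 :=
        lt_of_le_of_ne (sq_nonneg _) (Ne.symm (pow_ne_zero 2 hx₁))
      obtain ⟨R, hR⟩ := Filter.eventually_atTop.1 (hv0.eventually (eventually_lt_nhds hε))
      set R' := max R (max x₁ 0) with hR'def
      have hR'0 : (0:ℝ) ≤ R' := le_trans (le_max_right x₁ 0) (le_max_right _ _)
      have hx₁R' : x₁ ≤ R' := le_trans (le_max_left x₁ 0) (le_max_right _ _)
      obtain ⟨x₀, hx₀mem, hmax⟩ := isCompact_Icc.exists_isMaxOn ⟨0, by
          exact Set.mem_Icc.2 ⟨le_rfl, hR'0⟩⟩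
        (hv_cont.mono (Set.Icc_subset_Ici_self))
      have hx₁mem : x₁ ∈ Set.Icc (0:ℝ) R' := ⟨hx₁0, hx₁R'⟩
      refine ⟨x₀, hx₀mem.1, lt_of_lt_of_le hε (hmax hx₁mem), ?_⟩
      intro x hx
      by_cases hxR : x ≤ R'
      · exact hmax ⟨hx, hxR⟩
      · push_neg at hxR
        have h1 : u x ^ 2 < u x₁ ^ 2 :=
          hR x (le_of_lt (lt_of_le_of_lt (le_trans (le_max_left R _) le_rfl) hxR))
        exact le_trans h1.le (hmax hx₁mem)
    set S := u x₀ ^ 2 with hS_def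
    have hS_pos : 0 < S := hS_att
    -- the antiderivative ψ
    set ψ : ℝ → ℝ := fun t => ∫ s in (0:ℝ)..t, Real.sqrt (S ^ 2 - s ^ 2) with hψ_def
    have hsq_cont : Continuous fun s : ℝ => Real.sqrt (S ^ 2 - s ^ 2) :=
      Real.continuous_sqrt.comp (continuous_const.sub (continuous_pow 2))
    have hψd : ∀ t : ℝ, HasDerivAt ψ (Real.sqrt (S ^ 2 - t ^ 2)) t := by
      intro t
      exact intervalIntegral.integral_hasDerivAt_right
        (hsq_cont.intervalIntegrable _ _)
        (hsq_cont.stronglyMeasurableAtFilter _ _)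
        hsq_cont.continuousAt
    have hcont1 : Continuous fun x : ℝ => Real.sqrt (1 - x ^ 2) :=
      Real.continuous_sqrt.comp (continuous_const.sub (continuous_pow 2))
    have h01 : ∫ x in (0:ℝ)..1, Real.sqrt (1 - x ^ 2) = Real.pi / 4 := by
      have heven : (∫ x in (0:ℝ)..1, Real.sqrt (1 - x ^ 2))
          = ∫ x in (-1:ℝ)..0, Real.sqrt (1 - x ^ 2) := by
        have h := intervalIntegral.integral_comp_neg (a := (0:ℝ)) (b := 1)
          (fun x => Real.sqrt (1 - x ^ 2))
        simpa using h
      have hadd := intervalIntegral.integral_add_adjacent_intervals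
        (μ := volume) (a := (-1:ℝ)) (b := 0) (c := 1)
        (hcont1.intervalIntegrable _ _) (hcont1.intervalIntegrable _ _)
      rw [integral_sqrt_one_sub_sq] at hadd
      linarith
    have hψS : ψ S = Real.pi * S ^ 2 / 4 := by
      have hscale := intervalIntegral.integral_comp_mul_left (a := (0:ℝ)) (b := 1)
        (fun s => Real.sqrt (S ^ 2 - s ^ 2)) (ne_of_gt hS_pos)
      have hrw : ∀ x : ℝ, Real.sqrt (S ^ 2 - (S * x) ^ 2) = S * Real.sqrt (1 - x ^ 2) := by
        intro x
        rw [show S ^ 2 - (S * x) ^ 2 = S ^ 2 * (1 - x ^ 2) by ring,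
          Real.sqrt_mul (sq_nonneg S), Real.sqrt_sq hS_pos.le]
      have hL : (∫ x in (0:ℝ)..1, Real.sqrt (S ^ 2 - (S * x) ^ 2))
          = S * (Real.pi / 4) := by
        rw [intervalIntegral.integral_congr (fun x _ => hrw x),
          intervalIntegral.integral_const_mul, h01]
      rw [hL, mul_zero, mul_one, smul_eq_mul] at hscale
      have : ψ S = ∫ s in (0:ℝ)..S, Real.sqrt (S ^ 2 - s ^ 2) := rfl
      rw [this]
      have hS0 : S ≠ 0 := ne_of_gt hS_pos
      field_simp at hscale
      linarith
    -- the derivative of H = ψ ∘ u^2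
    set D : ℝ → ℝ := fun x => Real.sqrt (S ^ 2 - (u x ^ 2) ^ 2) * (2 * u x * u' x)
      with hD_def
    have hHd : ∀ x ∈ Set.Ici (0:ℝ),
        HasDerivWithinAt (fun y => ψ (u y ^ 2)) (D x) (Set.Ici 0) x := by
      intro x hx
      have h1 : HasDerivWithinAt (fun y => u y ^ 2) (2 * u x * u' x) (Set.Ici 0) x := by
        have := (hderiv x hx).pow 2
        show HasDerivWithinAt (u ^ 2) (2 * u x * u' x) (Set.Ici 0) x
        simpa [mul_comm, mul_assoc] using this
      exact (hψd (u x ^ 2)).comp_hasDerivWithinAt x h1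
    have hD_meas : AEStronglyMeasurable D (volume.restrict (Set.Ioi 0)) := by
      have hm1 : AEMeasurable (fun x => Real.sqrt (S ^ 2 - (u x ^ 2) ^ 2))
          (volume.restrict (Set.Ioi 0)) :=
        (Real.continuous_sqrt.comp
          (continuous_const.sub
            ((continuous_pow 2).comp (continuous_pow 2)))).measurable.comp_aemeasurable'
          hu_meas
      exact (hm1.mul ((hu_meas.const_mul 2).mul hu'_meas)).aestronglyMeasurable
    have hD_bound : ∀ x : ℝ, ‖D x‖ ≤ S * (u x ^ 2 + u' x ^ 2) := by
      intro x
      have hs : Real.sqrt (S ^ 2 - (u x ^ 2) ^ 2) ≤ S := by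
        calc Real.sqrt (S ^ 2 - (u x ^ 2) ^ 2) ≤ Real.sqrt (S ^ 2) :=
              Real.sqrt_le_sqrt (by nlinarith [sq_nonneg (u x ^ 2)])
          _ = S := Real.sqrt_sq hS_pos.le
      have hs0 : 0 ≤ Real.sqrt (S ^ 2 - (u x ^ 2) ^ 2) := Real.sqrt_nonneg _
      have habs : |2 * u x * u' x| ≤ u x ^ 2 + u' x ^ 2 := by
        rw [abs_mul, abs_mul, abs_two]
        nlinarith [sq_nonneg (|u x| - |u' x|), sq_abs (u x), sq_abs (u' x),
          abs_nonneg (u x), abs_nonneg (u' x)]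
      rw [Real.norm_eq_abs, hD_def, abs_mul, abs_of_nonneg hs0]
      exact mul_le_mul hs habs (abs_nonneg _) hS_pos.le
    have hD_int : IntegrableOn D (Set.Ioi 0) := by
      refine ((h2.add h2').const_mul S).mono' hD_meas ?_
      filter_upwards with x
      simpa using hD_bound x
    set C := ∫ x in Set.Ioi (0:ℝ), |D x| with hC_def
    -- key inequality : ψ S ≤ C
    have hkey1 : ψ S ≤ C := by
      have hHmono : ∀ b, x₀ ≤ b → ψ S ≤ ψ (u b ^ 2) + C := by
        intro b hb
        have hftcH := hftc (fun y => ψ (u y ^ 2)) D hHd hD_int x₀ b hx₀0 hb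
        have habs : |∫ y in x₀..b, D y| ≤ C := by
          refine le_trans (intervalIntegral.abs_integral_le_integral_abs hb) ?_
          rw [intervalIntegral.integral_of_le hb]
          refine setIntegral_mono_set hD_int.abs ?_ ?_
          · filter_upwards with x using abs_nonneg _
          · exact HasSubset.Subset.eventuallyLE (fun y hy => lt_of_le_of_lt hx₀0 hy.1)
        have heq : ψ (u b ^ 2) - ψ S = ∫ y in x₀..b, D y := by
          rw [hftcH, hS_def]
        have := neg_abs_le (∫ y in x₀..b, D y)
        linarith
      have htend : Filter.Tendsto (fun b => ψ (u b ^ 2) + C) Filter.atTop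
          (nhds (ψ 0 + C)) :=
        (((hψd 0).continuousAt).tendsto.comp hv0).add_const C
      have hψ0 : ψ 0 = 0 := intervalIntegral.integral_same
      have h := ge_of_tendsto htend (Filter.eventually_atTop.2 ⟨x₀, hHmono⟩)
      rw [hψ0, zero_add] at h
      exact h
    -- Cauchy-Schwarz / AM-GM bound on C
    set W := S ^ 2 * I - A with hW_def
    have amgm : ∀ a b lam : ℝ, 0 < lam → 2 * a * b ≤ lam * a ^ 2 + lam⁻¹ * b ^ 2 := by
      intro a b lam hlam
      have h1 : lam * a ^ 2 + lam⁻¹ * b ^ 2 - 2 * a * b = (lam * a - b) ^ 2 * lam⁻¹ := by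
        field_simp
        ring
      have h2 : 0 ≤ (lam * a - b) ^ 2 * lam⁻¹ :=
        mul_nonneg (sq_nonneg _) (inv_nonneg.2 hlam.le)
      linarith
    have hkey2 : ∀ lam : ℝ, 0 < lam → Real.pi * S ^ 2 / 4 ≤ lam * J + lam⁻¹ * W := by
      intro lam hlam
      rw [← hψS]
      refine le_trans hkey1 ?_
      have e1 : IntegrableOn (fun x => S ^ 2 * u x ^ 2 - u x ^ 6) (Set.Ioi 0) :=
        (h2.const_mul (S ^ 2)).sub h6
      have hint_rhs : IntegrableOn
          (fun x => lam * u' x ^ 2 + lam⁻¹ * (S ^ 2 * u x ^ 2 - u x ^ 6)) (Set.Ioi 0) :=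
        (h2'.const_mul lam).add (e1.const_mul lam⁻¹)
      have hpt : ∀ x ∈ Set.Ioi (0:ℝ),
          |D x| ≤ lam * u' x ^ 2 + lam⁻¹ * (S ^ 2 * u x ^ 2 - u x ^ 6) := by
        intro x hx
        have hb : u x ^ 2 ≤ S := hS_bound x (le_of_lt hx)
        have hnn : 0 ≤ S ^ 2 - (u x ^ 2) ^ 2 := by nlinarith [sq_nonneg (u x)]
        have hr2 : Real.sqrt (S ^ 2 - (u x ^ 2) ^ 2) ^ 2 = S ^ 2 - (u x ^ 2) ^ 2 :=
          Real.sq_sqrt hnn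
        have hr0 : 0 ≤ Real.sqrt (S ^ 2 - (u x ^ 2) ^ 2) := Real.sqrt_nonneg _
        have habs : |D x| = 2 * |u' x| * (|u x| * Real.sqrt (S ^ 2 - (u x ^ 2) ^ 2)) := by
          rw [hD_def]
          rw [abs_mul, abs_of_nonneg hr0, abs_mul, abs_mul, abs_two]
          ring
        have hb2 : (|u x| * Real.sqrt (S ^ 2 - (u x ^ 2) ^ 2)) ^ 2
            = S ^ 2 * u x ^ 2 - u x ^ 6 := by
          rw [mul_pow, sq_abs, hr2]
          ring
        have hmain := amgm (|u' x|) (|u x| * Real.sqrt (S ^ 2 - (u x ^ 2) ^ 2)) lam hlam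
        rw [habs, ← hb2, ← sq_abs (u' x)]
        exact hmain
      calc C ≤ ∫ x in Set.Ioi (0:ℝ),
              (lam * u' x ^ 2 + lam⁻¹ * (S ^ 2 * u x ^ 2 - u x ^ 6)) :=
            setIntegral_mono_on hD_int.abs hint_rhs measurableSet_Ioi hpt
        _ = lam * J + lam⁻¹ * W := by
            rw [integral_add (h2'.const_mul lam) (e1.const_mul lam⁻¹),
              integral_const_mul, integral_const_mul,
              integral_sub (h2.const_mul (S ^ 2)) h6, integral_const_mul,
              hW_def, hJ_def, hI_def, hA_def]
    -- conclusion
    clear_value W S I J A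
    have hJ_pos : 0 < J := by
      by_contra hJ
      have hJ0 : J = 0 := le_antisymm (not_lt.1 hJ) hJ_nonneg
      have h1 := hkey2 1 one_pos
      rw [hJ0] at h1
      simp only [mul_zero, inv_one, one_mul, zero_add] at h1
      have hπS : 0 < Real.pi * S ^ 2 := by positivity
      have hW_pos : 0 < W := lt_of_lt_of_le (by linarith) h1
      have h2 := hkey2 (8 * W / (Real.pi * S ^ 2)) (div_pos (by linarith) hπS)
      rw [hJ0, mul_zero, zero_add, inv_div] at h2
      have hc : Real.pi * S ^ 2 / (8 * W) * W = Real.pi * S ^ 2 / 8 := by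
        field_simp [hW_pos.ne']
      rw [hc] at h2
      linarith
    have hJW : Real.pi ^ 2 * S ^ 4 / 64 ≤ J * W := by
      have hπS : 0 < Real.pi * S ^ 2 := by positivity
      have hlam : 0 < Real.pi * S ^ 2 / (8 * J) := div_pos hπS (by linarith)
      have h := hkey2 _ hlam
      have hcancel : Real.pi * S ^ 2 / (8 * J) * J = Real.pi * S ^ 2 / 8 := by
        field_simp [hJ_pos.ne']
      rw [hcancel, inv_div] at h
      have h2 : Real.pi * S ^ 2 / 8 ≤ 8 * J / (Real.pi * S ^ 2) * W := by linarith
      have h3 := mul_le_mul_of_nonneg_right h2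
        (by positivity : (0:ℝ) ≤ Real.pi * S ^ 2 / 8)
      have h4 : 8 * J / (Real.pi * S ^ 2) * W * (Real.pi * S ^ 2 / 8) = J * W := by
        field_simp
      rw [h4] at h3
      nlinarith [h3]
    have hA_eq : A = S ^ 2 * I - W := by rw [hW_def]; ring
    rw [hA_eq, show 16 / Real.pi ^ 2 * I ^ 2 * J = 16 * I ^ 2 * J / Real.pi ^ 2 by ring,
      le_div_iff₀ (by positivity : (0:ℝ) < Real.pi ^ 2)]
    have hJW2 := mul_le_mul_of_nonneg_left hJW (sq_nonneg Real.pi)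
    refine le_of_mul_le_mul_right ?_ hJ_pos
    nlinarith [hJW2, sq_nonneg (32 * I * J - Real.pi ^ 2 * S ^ 2)]
end

section
/- Let ℓ > 0 and let ψ : [0,ℓ] → ℝ be continuous, nonnegative and nonincreasing with ψ ∈ L². Then there exists x₀ ∈ [ℓ/2, ℓ) such that ψ(x₀)⁴ ≤ (64 m^{1/2}/ℓ²) (∫_{x₀}^{ℓ} ψ² dx)^{3/2}, where m := ∫_{ℓ/2}^{ℓ} ψ² dx. -/
open MeasureTheory

/-- Selection lemma: for a continuous, nonnegative, nonincreasing `ψ` on `[0,ℓ]`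
there exists `x₀ ∈ [ℓ/2, ℓ)` with
`ψ(x₀)⁴ ≤ (64 √m/ℓ²)(∫_{x₀}^ℓ ψ²)^{3/2}`, where `m = ∫_{ℓ/2}^ℓ ψ²`. -/
theorem stmt_10 (ℓ : ℝ) (hℓ : 0 < ℓ) (ψ : ℝ → ℝ)
    (hc : ContinuousOn ψ (Set.Icc 0 ℓ))
    (hpos : ∀ x ∈ Set.Icc 0 ℓ, 0 ≤ ψ x)
    (hmono : AntitoneOn ψ (Set.Icc 0 ℓ)) :
    ∃ x₀ ∈ Set.Ico (ℓ/2) ℓ,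
      (ψ x₀) ^ 4 ≤ 64 * Real.sqrt (∫ x in (ℓ/2)..ℓ, (ψ x) ^ 2) / ℓ ^ 2 *
        (∫ x in x₀..ℓ, (ψ x) ^ 2) ^ ((3:ℝ)/2) := by
  by_contra hcon
  push_neg at hcon
  set m := ∫ x in (ℓ/2)..ℓ, (ψ x) ^ 2 with hm
  set F : ℝ → ℝ := fun x => ∫ t in x..ℓ, (ψ t) ^ 2 with hF
  have hhalf : (0:ℝ) < ℓ/2 := by linarith
  have hhalfl : ℓ/2 < ℓ := by linarith
  -- ψ² continuous on [0,ℓ]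
  have hψ2 : ContinuousOn (fun t => (ψ t)^2) (Set.Icc 0 ℓ) := hc.pow 2
  -- integrability
  have hint : ∀ a b : ℝ, a ∈ Set.Icc (0:ℝ) ℓ → b ∈ Set.Icc (0:ℝ) ℓ →
      IntervalIntegrable (fun t => (ψ t)^2) volume a b := by
    intro a b ha hb
    exact (hψ2.mono (Set.uIcc_subset_Icc ha hb)).intervalIntegrable
  -- F nonneg on [0,ℓ]
  have hF0 : ∀ x ∈ Set.Icc (0:ℝ) ℓ, 0 ≤ F x := by
    intro x hx
    exact intervalIntegral.integral_nonneg hx.2 (fun u _ => sq_nonneg _)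
  -- ψ positive on [ℓ/2, ℓ)
  have hψpos : ∀ x ∈ Set.Ico (ℓ/2) ℓ, 0 < ψ x := by
    intro x hx
    have hx' : x ∈ Set.Icc (0:ℝ) ℓ := ⟨le_trans hhalf.le hx.1, hx.2.le⟩
    have h1 := hcon x hx
    have h2 : (0:ℝ) ≤ 64 * Real.sqrt m / ℓ ^ 2 * (F x) ^ ((3:ℝ)/2) := by
      apply mul_nonneg
      · positivity
      · exact Real.rpow_nonneg (hF0 x hx') _
    have h3 : 0 < (ψ x)^4 := lt_of_le_of_lt h2 h1
    rcases (hpos x hx').lt_or_eq with h | h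
    · exact h
    · exfalso; rw [← h] at h3; simp at h3
  -- F positive on [ℓ/2, ℓ)
  have hFpos : ∀ x ∈ Set.Ico (ℓ/2) ℓ, 0 < F x := by
    intro x hx
    have hx' : x ∈ Set.Icc (0:ℝ) ℓ := ⟨le_trans hhalf.le hx.1, hx.2.le⟩
    apply intervalIntegral.intervalIntegral_pos_of_pos_on
      (hint x ℓ hx' (Set.right_mem_Icc.2 hℓ.le))
    · intro t ht
      have : t ∈ Set.Ico (ℓ/2) ℓ := ⟨le_trans hx.1 ht.1.le, ht.2⟩
      exact pow_pos (hψpos t this) 2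
    · exact hx.2
  have hmF : m = F (ℓ/2) := rfl
  have hm0 : 0 < m := hFpos (ℓ/2) ⟨le_refl _, hhalfl⟩
  set s := Real.sqrt (Real.sqrt m) with hs
  have hs0 : 0 < s := Real.sqrt_pos.2 (Real.sqrt_pos.2 hm0)
  -- key pointwise inequality: 8 s / ℓ * F x ^ (3/4) < ψ x ^ 2
  have key : ∀ x ∈ Set.Ico (ℓ/2) ℓ, 8 * s / ℓ * (F x) ^ ((3:ℝ)/4) < (ψ x) ^ 2 := by
    intro x hx
    have hx' : x ∈ Set.Icc (0:ℝ) ℓ := ⟨le_trans hhalf.le hx.1, hx.2.le⟩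
    have hFx : 0 ≤ F x := hF0 x hx'
    have h1 := hcon x hx
    have hsq : (8 * s / ℓ * (F x) ^ ((3:ℝ)/4)) ^ 2
        = 64 * Real.sqrt m / ℓ ^ 2 * (F x) ^ ((3:ℝ)/2) := by
      have e1 : ((F x) ^ ((3:ℝ)/4)) ^ 2 = (F x) ^ ((3:ℝ)/2) := by
        rw [← Real.rpow_natCast ((F x) ^ ((3:ℝ)/4)) 2, ← Real.rpow_mul hFx]
        norm_num
      have e2 : s ^ 2 = Real.sqrt m := Real.sq_sqrt (Real.sqrt_nonneg m)
      field_simp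
      rw [e1, e2]
      ring
    have h2 : (8 * s / ℓ * (F x) ^ ((3:ℝ)/4)) ^ 2 < (ψ x ^ 2) ^ 2 := by
      rw [hsq]; calc 64 * Real.sqrt m / ℓ ^ 2 * (F x) ^ ((3:ℝ)/2) < (ψ x)^4 := h1
        _ = (ψ x ^ 2) ^ 2 := by ring
    exact lt_of_pow_lt_pow_left₀ 2 (sq_nonneg _) h2
  -- derivative of F at interior points
  have hFderiv : ∀ x ∈ Set.Ioo (ℓ/2) ℓ, HasDerivAt F (-((ψ x)^2)) x := by
    intro x hx
    have hx0 : x ∈ Set.Ioo (0:ℝ) ℓ := ⟨lt_trans hhalf hx.1, hx.2⟩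
    have hmeas : StronglyMeasurableAtFilter (fun t => (ψ t)^2) (nhds x) := by
      refine ⟨Set.Ioo 0 ℓ, isOpen_Ioo.mem_nhds hx0, ?_⟩
      exact ((hψ2.mono Set.Ioo_subset_Icc_self).aestronglyMeasurable
        measurableSet_Ioo)
    have hca : ContinuousAt (fun t => (ψ t)^2) x :=
      (hψ2.continuousAt (Icc_mem_nhds hx0.1 hx0.2))
    exact intervalIntegral.integral_hasDerivAt_left
      (hint x ℓ ⟨hx0.1.le, hx0.2.le⟩ (Set.right_mem_Icc.2 hℓ.le)) hmeas hca
  -- G function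
  set G : ℝ → ℝ := fun x => (F x) ^ ((4:ℝ)⁻¹) + (2 * s / ℓ) * (x - ℓ/2) with hG
  -- continuity of F on [ℓ/2, ℓ]
  have hFcont : ContinuousOn F (Set.Icc (ℓ/2) ℓ) := by
    have h := intervalIntegral.continuousOn_primitive_interval_left
      (f := fun t => (ψ t)^2) (μ := volume) (a := ℓ/2) (b := ℓ)
      (by
        rw [Set.uIcc_of_le hhalfl.le]
        exact (hψ2.mono (Set.Icc_subset_Icc hhalf.le le_rfl)).integrableOn_compact
          isCompact_Icc)
    rwa [Set.uIcc_of_le hhalfl.le] at h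
  have hGcont : ContinuousOn G (Set.Icc (ℓ/2) ℓ) := by
    apply ContinuousOn.add
    · exact hFcont.rpow_const (fun x _ => Or.inr (by norm_num))
    · exact (continuous_const.mul (continuous_id.sub continuous_const)).continuousOn
  -- deriv G < 0 on interior
  have hGderiv : ∀ x ∈ interior (Set.Icc (ℓ/2) ℓ), deriv G x < 0 := by
    intro x hx
    rw [interior_Icc] at hx
    have hxIco : x ∈ Set.Ico (ℓ/2) ℓ := ⟨hx.1.le, hx.2⟩
    have hFx : 0 < F x := hFpos x hxIco
    have hd1 : HasDerivAt (fun y => (F y) ^ ((4:ℝ)⁻¹))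
        (-((ψ x)^2) * (4:ℝ)⁻¹ * (F x) ^ ((4:ℝ)⁻¹ - 1)) x :=
      (hFderiv x hx).rpow_const (Or.inl hFx.ne')
    have hd2 : HasDerivAt (fun y => (2 * s / ℓ) * (y - ℓ/2)) (2 * s / ℓ) x := by
      have := ((hasDerivAt_id x).sub_const (ℓ/2)).const_mul (2 * s / ℓ)
      simpa using this
    have hd : HasDerivAt G (-((ψ x)^2) * (4:ℝ)⁻¹ * (F x) ^ ((4:ℝ)⁻¹ - 1) + 2 * s / ℓ) x :=
      hd1.add hd2
    rw [hd.deriv]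
    -- show the value is negative
    have hP : 0 < (F x) ^ ((3:ℝ)/4) := Real.rpow_pos_of_pos hFx _
    have hexp : (F x) ^ ((4:ℝ)⁻¹ - 1) = ((F x) ^ ((3:ℝ)/4))⁻¹ := by
      rw [← Real.rpow_neg hFx.le]
      norm_num
    rw [hexp]
    have hkey := key x hxIco
    have h8 : 2 * s / ℓ * (4 * (F x) ^ ((3:ℝ)/4)) < (ψ x)^2 := by
      calc 2 * s / ℓ * (4 * (F x) ^ ((3:ℝ)/4)) = 8 * s / ℓ * (F x) ^ ((3:ℝ)/4) := by ring
        _ < (ψ x)^2 := hkey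
    have h9 : 2 * s / ℓ < (ψ x)^2 * (4:ℝ)⁻¹ * ((F x) ^ ((3:ℝ)/4))⁻¹ := by
      rw [show (ψ x)^2 * (4:ℝ)⁻¹ * ((F x) ^ ((3:ℝ)/4))⁻¹
          = (ψ x)^2 / (4 * (F x) ^ ((3:ℝ)/4)) by ring,
        lt_div_iff₀ (by positivity)]
      exact h8
    nlinarith [h9]
  -- G strictly antitone
  have hanti : StrictAntiOn G (Set.Icc (ℓ/2) ℓ) :=
    strictAntiOn_of_deriv_neg (convex_Icc _ _) hGcont hGderiv
  have hlt : G ℓ < G (ℓ/2) :=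
    hanti (Set.left_mem_Icc.2 hhalfl.le) (Set.right_mem_Icc.2 hhalfl.le) hhalfl
  -- compute endpoint values
  have hsm : s = m ^ ((4:ℝ)⁻¹) := by
    rw [hs, Real.sqrt_eq_rpow, Real.sqrt_eq_rpow, ← Real.rpow_mul hm0.le]
    norm_num
  have hGl2 : G (ℓ/2) = m ^ ((4:ℝ)⁻¹) := by
    simp only [hG, hmF, sub_self, mul_zero, add_zero]
  have hFl : F ℓ = 0 := intervalIntegral.integral_same
  have hGl : G ℓ = m ^ ((4:ℝ)⁻¹) := by
    simp only [hG, hFl]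
    rw [Real.zero_rpow (by norm_num), zero_add, hsm]
    field_simp
    ring
  rw [hGl, hGl2] at hlt
  exact lt_irrefl _ hlt
end
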